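/- Let C be a conjugation on a complex Hilbert space H and let e, f ∈ H be unit vectors. Define X = e ⊗ (Cf) − f ⊗ (Ce). Then X satisfies CXC = −X*, and 1 − |⟨f, e⟩|² ≤ ‖X‖ ≤ 2. -/

import Mathlib

open scoped InnerProductSpace

theorem rankOne_skew_norm_estimate {H : Type*} [NormedAddCommGroup H]
    [InnerProductSpace ℂ H] [CompleteSpace H] (C : H → H)
    (hadd : ∀ x y, C (x + y) = C x + C y)
    (hsmul : ∀ (a : ℂ) (x : H), C (a • x) = (starRingEnd ℂ a) • C x)
    (hinv : ∀ x, C (C x) = x)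
    (hC : ∀ x y, ⟪C x, C y⟫_ℂ = ⟪y, x⟫_ℂ)
    (e f : H) (he : ‖e‖ = 1) (hf : ‖f‖ = 1)
    (X : H →L[ℂ] H)
    (hXdef : X = (innerSL ℂ (C f)).smulRight e - (innerSL ℂ (C e)).smulRight f) :
    (∀ x, C (X (C x)) = -(ContinuousLinearMap.adjoint X) x) ∧
    1 - ‖⟪e, f⟫_ℂ‖ ^ 2 ≤ ‖X‖ ∧ ‖X‖ ≤ 2 := by
  have hC' : ∀ x y : H, ⟪x, C y⟫_ℂ = ⟪y, C x⟫_ℂ := by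
    intro x y
    conv_lhs => rw [← hinv x, hC]
  have hCnorm : ∀ x : H, ‖C x‖ = ‖x‖ := by
    intro x
    rw [norm_eq_sqrt_re_inner (𝕜 := ℂ) (C x), norm_eq_sqrt_re_inner (𝕜 := ℂ) x, hC]
  refine ⟨?_, ?_, ?_⟩
  · intro x
    apply ext_inner_left ℂ
    intro y
    rw [hC' y, hXdef]
    simp only [ContinuousLinearMap.sub_apply, ContinuousLinearMap.smulRight_apply,
      innerSL_apply_apply, ContinuousLinearMap.adjoint_inner_right, inner_neg_right,
      inner_sub_left, inner_sub_right, inner_smul_left, inner_smul_right,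
      inner_neg_left, inner_conj_symm]
    rw [hC x f, hC x e, hC' e y, hC' f y]
    ring
  · have hXCf : X (C f) = e - ⟪f, e⟫_ℂ • f := by
      rw [hXdef]
      simp only [ContinuousLinearMap.sub_apply, ContinuousLinearMap.smulRight_apply,
        innerSL_apply_apply]
      rw [hC f f, hC e f, @inner_self_eq_norm_sq_to_K ℂ, hf]
      norm_num
    have hle : ‖X (C f)‖ ≤ ‖X‖ := by
      have := X.le_opNorm (C f)
      rwa [hCnorm, hf, mul_one] at this
    have hsq : ‖X (C f)‖ ^ 2 = 1 - ‖⟪e, f⟫_ℂ‖ ^ 2 := by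
      rw [hXCf]
      rw [@norm_sub_sq ℂ H _ _ _ e (⟪f, e⟫_ℂ • f), inner_smul_right, norm_smul, hf, he,
        ← inner_conj_symm e f, Complex.mul_conj]
      simp only [Complex.normSq_eq_norm_sq, ← Complex.ofReal_pow,
        Complex.ofReal_re, RCLike.re_to_complex, ← inner_conj_symm f e, Complex.norm_conj]
      ring
    have hnn : ‖X (C f)‖ ≤ 1 := by nlinarith [norm_nonneg (X (C f)), norm_nonneg ⟪e, f⟫_ℂ]
    nlinarith [norm_nonneg (X (C f))]
  · rw [hXdef]
    refine le_trans (norm_sub_le _ _) ?_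
    have h1 : ‖((innerSL ℂ (C f)).smulRight e : H →L[ℂ] H)‖ ≤ 1 := by
      rw [ContinuousLinearMap.norm_smulRight_apply, innerSL_apply_norm, hCnorm, hf, he]
      norm_num
    have h2 : ‖((innerSL ℂ (C e)).smulRight f : H →L[ℂ] H)‖ ≤ 1 := by
      rw [ContinuousLinearMap.norm_smulRight_apply, innerSL_apply_norm, hCnorm, he, hf]
      norm_num
    linarith
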